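/- Let u be a regular linear functional satisfying D(φu) = ψu with nonzero φ ∈ P₂ and ψ ∈ P₁. Then ψ has degree exactly 1, φ is not identically zero, and d_n := n·(leading coefficient of φ's degree-2 term) + ψ' ≠ 0 for all n ≥ 0 (writing φ(x) = ax² + bx + c, ψ(x) = px + q, this says na + p ≠ 0 for all n ≥ 0). -/

import Mathlib

open Polynomial

/-- Every complex polynomial has an antiderivative. -/
private lemma antideriv (s : Polynomial ℂ) : ∃ ρ : Polynomial ℂ, derivative ρ = s := by
  refine ⟨s.sum fun n a => C (a / (n + 1)) * X ^ (n + 1), ?_⟩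
  rw [Polynomial.sum, map_sum]
  conv_rhs => rw [s.as_sum_support]
  refine Finset.sum_congr rfl fun n _ => ?_
  rw [derivative_C_mul_X_pow]
  have h : ((n : ℂ) + 1) ≠ 0 := Nat.cast_add_one_ne_zero n
  rw [show ((n + 1 : ℕ) : ℂ) = (n : ℂ) + 1 by push_cast; ring]
  rw [div_mul_cancel₀ _ h]
  simp [C_mul_X_pow_eq_monomial]

section Aux

variable (u : Polynomial ℂ →ₗ[ℂ] ℂ) (P : ℕ → Polynomial ℂ)
variable (hdeg : ∀ n, (P n).degree = n)
variable (horth : ∀ m n, m ≠ n → u (P m * P n) = 0)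
variable (hne : ∀ n, u (P n * P n) ≠ 0)

include hdeg horth

/-- Orthogonality to lower-degree polynomials. -/
private lemma orth_lower : ∀ (k : ℕ) (n : ℕ) (r : Polynomial ℂ),
    r.natDegree < k → r.degree < (n : WithBot ℕ) → u (P n * r) = 0 := by
  intro k
  induction k with
  | zero => intro n r h; omega
  | succ k ih =>
    intro n r hk hdr
    by_cases hr : r = 0
    · simp [hr]
    set d := r.natDegree with hd
    have hPd0 : P d ≠ 0 := fun h => by simpa [h] using hdeg d
    set e := (P d).leadingCoeff with he
    have he0 : e ≠ 0 := leadingCoeff_ne_zero.mpr hPd0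
    set cc := r.leadingCoeff / e with hcc
    set r' := r - C cc * P d with hr'
    have hdegPd : (P d).degree = (d : WithBot ℕ) := hdeg d
    have hcoeffPd : (P d).coeff d = e := by
      rw [he, leadingCoeff, natDegree_eq_of_degree_eq_some hdegPd]
    have hdr' : r'.degree < (d : WithBot ℕ) := by
      rw [hr']
      apply lt_of_le_of_ne
      · apply le_trans (degree_sub_le _ _)
        rw [sup_le_iff]
        constructor
        · exact degree_le_natDegree
        · calc (C cc * P d).degree ≤ (C cc).degree + (P d).degree := degree_mul_le _ _
            _ ≤ 0 + (d : WithBot ℕ) := add_le_add degree_C_le (le_of_eq hdegPd)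
            _ = (d : WithBot ℕ) := zero_add _
      · intro habs
        have : (r - C cc * P d).coeff d ≠ 0 := by
          intro h0
          have := coeff_ne_zero_of_eq_degree habs
          exact this h0
        apply this
        simp only [coeff_sub, coeff_C_mul, hcoeffPd]
        rw [hcc, div_mul_cancel₀ _ he0, leadingCoeff, ← hd, sub_self]
    have hdn : d < n := by
      have : r.degree = (d : WithBot ℕ) := degree_eq_natDegree hr
      rw [this] at hdr
      exact_mod_cast hdr
    have h1 : u (P n * r') = 0 := by
      by_cases hz : r' = 0
      · simp [hz]
      · apply ih n r' _ (lt_trans hdr' (by exact_mod_cast hdn))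
        have := (natDegree_lt_iff_degree_lt hz).mpr hdr'
        omega
    have h2 : u (P n * P d) = 0 := horth n d (by omega)
    have : P n * r = cc • (P n * P d) + P n * r' := by
      rw [hr', smul_eq_C_mul]; ring
    rw [this, map_add, map_smul, h2, h1]
    simp

include hne in
/-- A polynomial orthogonal to everything is zero. -/
private lemma perp_all_eq_zero (t : Polynomial ℂ) (h : ∀ s, u (t * s) = 0) : t = 0 := by
  by_contra ht
  set d := t.natDegree with hd
  have hPd0 : P d ≠ 0 := fun h => by simpa [h] using hdeg d
  set e := (P d).leadingCoeff with he
  have he0 : e ≠ 0 := leadingCoeff_ne_zero.mpr hPd0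
  set cc := t.leadingCoeff / e with hcc
  have hcc0 : cc ≠ 0 := div_ne_zero (leadingCoeff_ne_zero.mpr ht) he0
  set t' := t - C cc * P d with ht'
  have hdegPd : (P d).degree = (d : WithBot ℕ) := hdeg d
  have hcoeffPd : (P d).coeff d = e := by
    rw [he, leadingCoeff, natDegree_eq_of_degree_eq_some hdegPd]
  have hdt' : t'.degree < (d : WithBot ℕ) := by
    rw [ht']
    apply lt_of_le_of_ne
    · apply le_trans (degree_sub_le _ _)
      rw [sup_le_iff]
      constructor
      · exact degree_le_natDegree
      · calc (C cc * P d).degree ≤ (C cc).degree + (P d).degree := degree_mul_le _ _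
          _ ≤ 0 + (d : WithBot ℕ) := add_le_add degree_C_le (le_of_eq hdegPd)
          _ = (d : WithBot ℕ) := zero_add _
    · intro habs
      have : (t - C cc * P d).coeff d ≠ 0 := by
        intro h0
        exact coeff_ne_zero_of_eq_degree habs h0
      apply this
      simp only [coeff_sub, coeff_C_mul, hcoeffPd]
      rw [hcc, div_mul_cancel₀ _ he0, leadingCoeff, ← hd, sub_self]
  have horthlow : u (P d * t') = 0 := by
    by_cases hz : t' = 0
    · simp [hz]
    · exact orth_lower u P hdeg horth (t'.natDegree + 1) d t' (by omega) hdt'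
  have hexp : t * P d = cc • (P d * P d) + P d * t' := by
    rw [ht', smul_eq_C_mul]; ring
  have := h (P d)
  rw [hexp, map_add, map_smul, horthlow, smul_eq_mul, add_zero] at this
  exact hne d (by
    rcases mul_eq_zero.mp this with h' | h'
    · exact absurd h' hcc0
    · exact h')

end Aux

/-- If a regular functional satisfies the Pearson equation `D(φu) = ψu` with `deg φ ≤ 2`,
`deg ψ ≤ 1` and not both zero, then `deg ψ = 1`, `φ ≠ 0`, and `na + p ≠ 0` for all `n`. -/
theorem regular_pearson_admissibility (u : Polynomial ℂ →ₗ[ℂ] ℂ) (a b c p q : ℂ)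
    (hreg : ∃ P : ℕ → Polynomial ℂ, (∀ n, (P n).degree = n) ∧
      (∀ m n, m ≠ n → u (P m * P n) = 0) ∧ (∀ n, u (P n * P n) ≠ 0))
    (hnz : C a * X ^ 2 + C b * X + C c ≠ 0 ∨ C p * X + C q ≠ 0)
    (hPearson : ∀ r : Polynomial ℂ,
      -(u ((C a * X ^ 2 + C b * X + C c) * Polynomial.derivative r)) =
        u ((C p * X + C q) * r)) :
    (C p * X + C q).degree = 1 ∧ (C a * X ^ 2 + C b * X + C c) ≠ 0 ∧
      ∀ n : ℕ, (n : ℂ) * a + p ≠ 0 := by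
  obtain ⟨P, hdeg, horth, hne⟩ := hreg
  set φ : Polynomial ℂ := C a * X ^ 2 + C b * X + C c with hφ
  set ψ : Polynomial ℂ := C p * X + C q with hψ
  -- `u` kills `ψ r + φ r'` for every `r`
  have hS : ∀ r : Polynomial ℂ, u (ψ * r + φ * derivative r) = 0 := by
    intro r
    rw [map_add, ← hPearson r]
    ring
  -- the perp lemma specialized
  have hperp : ∀ t : Polynomial ℂ, (∀ s, u (t * s) = 0) → t = 0 :=
    fun t ht => perp_all_eq_zero u P hdeg horth hne t ht
  -- u 1 ≠ 0
  have hu1 : u 1 ≠ 0 := by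
    intro h1
    have hP0 : P 0 = C ((P 0).coeff 0) := eq_C_of_degree_le_zero (le_of_eq (hdeg 0))
    apply hne 0
    have hC : (C ((P 0).coeff 0 * (P 0).coeff 0) : Polynomial ℂ)
        = ((P 0).coeff 0 * (P 0).coeff 0) • (1 : Polynomial ℂ) := by
      rw [smul_eq_C_mul, mul_one]
    rw [hP0, ← C_mul, hC, map_smul, h1, smul_zero]
  -- p ≠ 0
  have hp : p ≠ 0 := by
    intro hp0
    have h1 := hS 1
    rw [derivative_one, mul_zero, add_zero] at h1
    -- u ψ = 0, i.e. p * u X + q * u 1 = 0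
    have : q * u 1 = 0 := by
      have : ψ * 1 = p • X + q • (1 : Polynomial ℂ) := by
        simp [hψ, smul_eq_C_mul]
      rw [this, map_add, map_smul, map_smul, hp0, zero_smul, zero_add, smul_eq_mul] at h1
      exact h1
    have hq0 : q = 0 := by
      rcases mul_eq_zero.mp this with h | h
      · exact h
      · exact absurd h hu1
    have hψ0 : ψ = 0 := by simp [hψ, hp0, hq0]
    -- then u (φ s) = 0 for all s, so φ = 0
    have hφ0 : φ = 0 := by
      apply hperp
      intro s
      obtain ⟨ρ, hρ⟩ := antideriv s
      have := hS ρ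
      rw [hψ0, zero_mul, zero_add, hρ] at this
      exact this
    rcases hnz with h | h
    · exact h hφ0
    · exact h hψ0
  -- φ ≠ 0
  have hφne : φ ≠ 0 := by
    intro hφ0
    have hψ0 : ψ = 0 := by
      apply hperp
      intro s
      have := hS s
      rw [hφ0, zero_mul, add_zero] at this
      exact this
    have : p = 0 := by
      have := congrArg (fun f => coeff f 1) hψ0
      simpa [hψ, coeff_one] using this
    exact hp this
  refine ⟨degree_linear hp, hφne, ?_⟩
  -- admissibility
  intro N hdN
  have hN1 : 1 ≤ N := by
    rcases Nat.eq_zero_or_pos N with h | h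
    · subst h; simp at hdN; exact absurd hdN hp
    · exact h
  -- the operator S
  set S : Polynomial ℂ →ₗ[ℂ] Polynomial ℂ :=
    { toFun := fun π => ψ * π + φ * derivative π
      map_add' := by intro x y; simp [mul_add]; ring
      map_smul' := by intro m x; simp [Polynomial.smul_eq_C_mul]; ring } with hSdef
  have hSapply : ∀ π, S π = ψ * π + φ * derivative π := fun π => rfl
  -- S maps degreeLT (N+1) to itself
  have hmaps : Set.MapsTo S (degreeLT ℂ (N + 1) : Set (Polynomial ℂ))
      (degreeLT ℂ (N + 1) : Set (Polynomial ℂ)) := by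
    intro π hπ
    rw [SetLike.mem_coe, mem_degreeLT] at hπ ⊢
    have hπc : ∀ j, N + 1 ≤ j → π.coeff j = 0 := by
      intro j hj
      exact (degree_lt_iff_coeff_zero π (N + 1)).mp hπ j (by exact_mod_cast hj)
    rw [hSapply]
    apply (degree_lt_iff_coeff_zero _ (N + 1)).mpr
    intro m hm
    have hm' : N + 1 ≤ m := by exact_mod_cast hm
    obtain ⟨k, rfl⟩ : ∃ k, m = k + 2 := ⟨m - 2, by omega⟩
    have hk : N ≤ k + 1 := by omega
    have e1 : (ψ * π).coeff (k + 2) = p * π.coeff (k + 1) + q * π.coeff (k + 2) := by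
      rw [hψ, add_mul, coeff_add, mul_assoc, coeff_C_mul, coeff_C_mul, coeff_X_mul]
    have e2 : (φ * π.derivative).coeff (k + 2)
        = a * π.derivative.coeff k + b * π.derivative.coeff (k + 1)
          + c * π.derivative.coeff (k + 2) := by
      rw [hφ, add_mul, add_mul, coeff_add, coeff_add, mul_assoc, coeff_C_mul,
        mul_assoc, coeff_C_mul, coeff_C_mul]
      rw [show k + 2 = k + 1 + 1 from rfl, coeff_X_mul, coeff_X_pow_mul]
    rw [coeff_add, e1, e2, coeff_derivative, coeff_derivative, coeff_derivative]
    have hc2 : π.coeff (k + 2) = 0 := hπc _ (by omega)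
    have hc3 : π.coeff (k + 3) = 0 := hπc _ (by omega)
    simp only [show k + 1 + 1 = k + 2 from rfl, show k + 2 + 1 = k + 3 from rfl, hc2, hc3,
      zero_mul, mul_zero, add_zero, zero_add]
    rcases Nat.lt_or_ge k N with hkN | hkN
    · have hkN' : ((k : ℂ) + 1) * a + p = 0 := by
        have hkn : k + 1 = N := by omega
        rw [show ((k : ℂ) + 1) = ((N : ℕ) : ℂ) by rw [← hkn]; push_cast; ring]
        exact hdN
      linear_combination π.coeff (k + 1) * hkN'
    · rw [hπc (k + 1) (by omega)]
      ring
  -- finite dimensionality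
  have : FiniteDimensional ℂ (degreeLT ℂ (N + 1)) :=
    Module.Finite.equiv (degreeLTEquiv ℂ (N + 1)).symm
  set Sr : degreeLT ℂ (N + 1) →ₗ[ℂ] degreeLT ℂ (N + 1) := S.restrict hmaps with hSr
  by_cases hinj : Function.Injective Sr
  · -- surjective, so u 1 = 0, contradiction
    have hsurj : Function.Surjective Sr := LinearMap.injective_iff_surjective.mp hinj
    have h1mem : (1 : Polynomial ℂ) ∈ degreeLT ℂ (N + 1) := by
      rw [mem_degreeLT]
      exact lt_of_le_of_lt degree_one_le (by exact_mod_cast Nat.succ_pos N)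
    obtain ⟨⟨π, hπ⟩, hSπ⟩ := hsurj ⟨1, h1mem⟩
    have : S π = 1 := congrArg Subtype.val hSπ
    apply hu1
    rw [← this, hSapply]
    exact hS π
  · -- nontrivial kernel
    rw [Function.not_injective_iff] at hinj
    obtain ⟨x, y, hxy, hxyne⟩ := hinj
    set π₀ : Polynomial ℂ := (x : Polynomial ℂ) - (y : Polynomial ℂ) with hπ₀
    have hπ₀ne : π₀ ≠ 0 := by
      intro h
      apply hxyne
      exact Subtype.ext (by rw [sub_eq_zero] at h; exact h)
    have hSπ₀ : ψ * π₀ + φ * derivative π₀ = 0 := by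
      have : S π₀ = 0 := by
        rw [hπ₀, map_sub]
        have h2 := congrArg Subtype.val hxy
        simp only [hSr, LinearMap.restrict_coe_apply] at h2
        rw [show S ↑x = S ↑y from h2, sub_self]
      rw [← hSapply, this]
    -- u (φ * π₀ * s) = 0 for all s
    have hkill : ∀ s, u (φ * π₀ * s) = 0 := by
      intro s
      obtain ⟨ρ, hρ⟩ := antideriv s
      have h0 := hS (π₀ * ρ)
      have : ψ * (π₀ * ρ) + φ * derivative (π₀ * ρ)
          = ρ * (ψ * π₀ + φ * derivative π₀) + φ * π₀ * derivative ρ := by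
        rw [derivative_mul]; ring
      rw [this, hSπ₀, mul_zero, zero_add, hρ] at h0
      exact h0
    have : φ * π₀ = 0 := hperp _ hkill
    rcases mul_eq_zero.mp this with h | h
    · exact hφne h
    · exact hπ₀ne h
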